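/- Let G be a group that is boundedly generated by elements c₁, …, c_n with word bound N, i.e. every g ∈ G can be written g = c_{i_1}^{m_1} ⋯ c_{i_N}^{m_N} with each i_j ∈ {1, …, n} and m_j ∈ ℤ. If q is a homogeneous quasimorphism on G with q(c₁) = ⋯ = q(c_n) = 0, then q is identically zero on G. -/
import Mathlib


/-- If `G` is boundedly generated by `c₁, …, c_n` with word bound `N` and `q` is a
homogeneous quasimorphism vanishing on each `cᵢ`, then `q` is identically zero. -/
theorem homogeneous_quasimorphism_vanishing_on_bounded_generators {G : Type} [Group G]
    (n N : ℕ) (c : Fin n → G)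
    (hbg : ∀ g : G, ∃ (i : Fin N → Fin n) (m : Fin N → ℤ),
      g = (List.ofFn fun j => c (i j) ^ m j).prod)
    (q : G → ℝ)
    (hqm : ∃ D : ℝ, 0 ≤ D ∧ ∀ g h : G, |q (g * h) - q g - q h| ≤ D)
    (hhom : ∀ (g : G) (k : ℤ), q (g ^ k) = k * q g)
    (hzero : ∀ i : Fin n, q (c i) = 0) :
    ∀ g : G, q g = 0 := by
  obtain ⟨D, hD0, hD⟩ := hqm
  have hq1 : q 1 = 0 := by
    have := hhom 1 0; simpa using this
  -- any product of a list whose elements have q = 0 has |q| ≤ D * length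
  have key : ∀ L : List G, (∀ x ∈ L, q x = 0) → |q L.prod| ≤ D * L.length := by
    intro L
    induction L with
    | nil => intro _; simpa [hq1] using (by positivity : (0:ℝ) ≤ D * 0 + 0).trans_eq (by ring)
    | cons a t ih =>
      intro hL
      have ha : q a = 0 := hL a (by simp)
      have ht : |q t.prod| ≤ D * t.length := ih fun x hx => hL x (by simp [hx])
      have h1 : |q (a * t.prod) - q a - q t.prod| ≤ D := hD a t.prod
      have : |q (a * t.prod)| ≤ D + |q t.prod| := by
        calc |q (a * t.prod)| = |(q (a * t.prod) - q a - q t.prod) + q t.prod| := by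
              rw [ha]; ring_nf
          _ ≤ |q (a * t.prod) - q a - q t.prod| + |q t.prod| := abs_add_le _ _
          _ ≤ D + |q t.prod| := by linarith
      simp only [List.prod_cons, List.length_cons]
      push_cast
      linarith
  -- every element has |q| ≤ D * N
  have bdd : ∀ g : G, |q g| ≤ D * N := by
    intro g
    obtain ⟨i, m, hg⟩ := hbg g
    have hzeros : ∀ x ∈ (List.ofFn fun j => c (i j) ^ m j), q x = 0 := by
      intro x hx
      rw [List.mem_ofFn] at hx
      obtain ⟨j, rfl⟩ := hx
      rw [hhom, hzero, mul_zero]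
    have := key _ hzeros
    simpa [hg] using this
  intro g
  by_contra hne
  have hpos : 0 < |q g| := abs_pos.mpr hne
  obtain ⟨k, hk⟩ := exists_nat_gt ((D * N) / |q g|)
  have hk' : D * N < k * |q g| := by
    rw [div_lt_iff₀ hpos] at hk; linarith
  have : |q (g ^ (k : ℤ))| ≤ D * N := bdd _
  rw [hhom, abs_mul] at this
  rw [show |((k:ℤ):ℝ)| = (k:ℝ) by push_cast; exact abs_of_nonneg (by positivity)] at this
  linarith
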